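/- Fix n ≥ 1, ρ > -1, and t-dependent differentiable functions u_{n-1}, u_n, u_{n+1} with u_n nowhere zero. Assume u_k (u_{k-1} + u_k + u_{k+1} + 2t) = k + (2ρ+1)·odd(k) for k = n-1, n, n+1 (where odd(k) = (1-(-1)^k)/2 and u_0 = 0 if n = 1), together with u_k' = u_k (u_{k-1} - u_{k+1}) for k = n-1, n, n+1. Then u_n satisfies u_n'' = (u_n')^2/(2 u_n) + (3/2) u_n^3 + 4 t u_n^2 + 2( t^2 + n/2 + (2ρ+1)(1 + 3(-1)^n)/4 ) u_n - (n + (2ρ+1)·odd(n))^2 / (2 u_n). -/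

import Mathlib

/-- Key algebraic identity: eliminating the neighbors via the string equation. -/
lemma painleveIV_key (a b c t Rm Rn Rp K : ℝ) (hb : b ≠ 0)
    (hcon : b * (a + b + c + 2 * t) = Rn)
    (hK : Rm + Rp = Rn + K - 2 * t ^ 2) :
    b * (a - c) * (a - c) +
      b * ((Rm - a * (a + b + 2 * t)) - a * b - (c * b - (Rp - c * (b + c + 2 * t)))) =
    (b * (a - c)) ^ 2 / (2 * b) + (3 / 2) * b ^ 3 + 4 * t * b ^ 2 + K * b - Rn ^ 2 / (2 * b) := by
  have hm : Rm = Rn + K - 2 * t ^ 2 - Rp := by linarith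
  subst hm
  have hc : c = (Rn - b * a - b * b - 2 * t * b) / b := by
    field_simp
    linarith [hcon]
  subst hc
  field_simp
  ring

/-- Section 8: the generalized Freud string equations and Langmuir flow for the weight
`|u|^{2ρ+1} exp(-u⁴/4 - t u²)` imply a fourth Painlevé equation for `u_n = ã_n²`. -/
theorem painleveIV_generalized_freud (n : ℕ) (hn : 1 ≤ n) (ρ : ℝ) (hρ : ρ > -1)
    (u : ℕ → ℝ → ℝ)
    (hu0 : n = 1 → ∀ t, u 0 t = 0)
    (hne : ∀ t, u n t ≠ 0)
    (hdiff : ∀ k ∈ Finset.Icc (n - 1) (n + 1), Differentiable ℝ (u k))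
    (hstring : ∀ t : ℝ, ∀ k ∈ Finset.Icc (n - 1) (n + 1),
      u k t * (u (k - 1) t + u k t + u (k + 1) t + 2 * t) =
        k + (2 * ρ + 1) * ((1 - (-1 : ℝ) ^ k) / 2))
    (hflow : ∀ t : ℝ, ∀ k ∈ Finset.Icc (n - 1) (n + 1),
      deriv (u k) t = u k t * (u (k - 1) t - u (k + 1) t)) :
    ∀ t : ℝ, deriv (deriv (u n)) t =
      (deriv (u n) t) ^ 2 / (2 * u n t) + (3 / 2) * (u n t) ^ 3 + 4 * t * (u n t) ^ 2 +
        2 * (t ^ 2 + (n : ℝ) / 2 + (2 * ρ + 1) * (1 + 3 * (-1 : ℝ) ^ n) / 4) * u n t -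
        ((n : ℝ) + (2 * ρ + 1) * ((1 - (-1 : ℝ) ^ n) / 2)) ^ 2 / (2 * u n t) := by
  intro t
  have hmem : ∀ k, n - 1 ≤ k → k ≤ n + 1 → k ∈ Finset.Icc (n - 1) (n + 1) := by
    intro k h1 h2; simp [Finset.mem_Icc]; omega
  have hm1 : n - 1 ∈ Finset.Icc (n - 1) (n + 1) := hmem _ le_rfl (by omega)
  have hm2 : n ∈ Finset.Icc (n - 1) (n + 1) := hmem _ (by omega) (by omega)
  have hm3 : n + 1 ∈ Finset.Icc (n - 1) (n + 1) := hmem _ (by omega) le_rfl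
  have e1 : n - 1 + 1 = n := by omega
  have e2 : n + 1 - 1 = n := by omega
  -- derivative of u n as a function
  have hD : deriv (u n) = fun s => u n s * (u (n - 1) s - u (n + 1) s) := by
    funext s; exact hflow s n hm2
  have hdn1 : Differentiable ℝ (u (n - 1)) := hdiff _ hm1
  have hdn : Differentiable ℝ (u n) := hdiff _ hm2
  have hdn2 : Differentiable ℝ (u (n + 1)) := hdiff _ hm3
  have hderiv2 : deriv (deriv (u n)) t =
      u n t * (u (n - 1) t - u (n + 1) t) * (u (n - 1) t - u (n + 1) t) +
        u n t * (deriv (u (n - 1)) t - deriv (u (n + 1)) t) := by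
    have h1 : HasDerivAt (u n) (deriv (u n) t) t := (hdn t).hasDerivAt
    have h2 : HasDerivAt (u (n - 1)) (deriv (u (n - 1)) t) t := (hdn1 t).hasDerivAt
    have h3 : HasDerivAt (u (n + 1)) (deriv (u (n + 1)) t) t := (hdn2 t).hasDerivAt
    have hpr : deriv (fun s => u n s * (u (n - 1) s - u (n + 1) s)) t =
        deriv (u n) t * (u (n - 1) t - u (n + 1) t) +
          u n t * (deriv (u (n - 1)) t - deriv (u (n + 1)) t) := (h1.mul (h2.sub h3)).deriv
    rw [hD, hpr, hflow t n hm2]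
  -- flow equations for the neighbors
  have hfa : deriv (u (n - 1)) t = u (n - 1) t * (u (n - 1 - 1) t - u n t) := by
    have := hflow t (n - 1) hm1; rwa [e1] at this
  have hfc : deriv (u (n + 1)) t = u (n + 1) t * (u n t - u (n + 1 + 1) t) := by
    have := hflow t (n + 1) hm3; rwa [e2] at this
  -- string equations
  have hsa := hstring t (n - 1) hm1
  have hsb := hstring t n hm2
  have hsc := hstring t (n + 1) hm3
  rw [e1] at hsa
  rw [e2] at hsc
  set A := u (n - 1) t with hA
  set B := u n t with hB
  set C := u (n + 1) t with hC
  set X := u (n - 1 - 1) t with hX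
  set Y := u (n + 1 + 1) t with hY
  have hBne : B ≠ 0 := hne t
  -- sign manipulations
  have hsign1 : ((-1 : ℝ)) ^ (n - 1) = -(-1 : ℝ) ^ n := by
    have h : (-1 : ℝ) ^ n = (-1 : ℝ) ^ (n - 1 + 1) := by rw [e1]
    rw [h, pow_succ]; ring
  have hsign2 : ((-1 : ℝ)) ^ (n + 1) = -(-1 : ℝ) ^ n := by
    rw [pow_succ]; ring
  have hcast1 : ((n - 1 : ℕ) : ℝ) = (n : ℝ) - 1 := by
    rw [Nat.cast_sub hn]; norm_num
  set Rm : ℝ := ((n : ℝ) - 1) + (2 * ρ + 1) * ((1 + (-1 : ℝ) ^ n) / 2) with hRm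
  set Rn : ℝ := (n : ℝ) + (2 * ρ + 1) * ((1 - (-1 : ℝ) ^ n) / 2) with hRn
  set Rp : ℝ := ((n : ℝ) + 1) + (2 * ρ + 1) * ((1 + (-1 : ℝ) ^ n) / 2) with hRp
  have hsa' : A * X = Rm - A * (A + B + 2 * t) := by
    have h : A * (X + A + B + 2 * t) = Rm := by
      rw [hsa, hcast1, hsign1, hRm]; ring
    linear_combination h
  have hsc' : C * Y = Rp - C * (B + C + 2 * t) := by
    have h : C * (B + C + Y + 2 * t) = Rp := by
      rw [hsc, hsign2, hRp]; push_cast; ring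
    linear_combination h
  have hsb' : B * (A + B + C + 2 * t) = Rn := hsb
  set K : ℝ := 2 * (t ^ 2 + (n : ℝ) / 2 + (2 * ρ + 1) * (1 + 3 * (-1 : ℝ) ^ n) / 4) with hKdef
  have hKrel : Rm + Rp = Rn + K - 2 * t ^ 2 := by
    rw [hRm, hRp, hRn, hKdef]; ring
  rw [hderiv2, hfa, hfc, hflow t n hm2]
  have key := painleveIV_key A B C t Rm Rn Rp K hBne hsb' hKrel
  calc B * (A - C) * (A - C) + B * (A * (X - B) - C * (B - Y))
      = B * (A - C) * (A - C) +
        B * ((Rm - A * (A + B + 2 * t)) - A * B - (C * B - (Rp - C * (B + C + 2 * t)))) := by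
        linear_combination B * hsa' + B * hsc'
    _ = (B * (A - C)) ^ 2 / (2 * B) + (3 / 2) * B ^ 3 + 4 * t * B ^ 2 + K * B - Rn ^ 2 / (2 * B) :=
        key
    _ = (B * (A - C)) ^ 2 / (2 * B) + 3 / 2 * B ^ 3 + 4 * t * B ^ 2 + K * B - Rn ^ 2 / (2 * B) := by
        ring
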